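/- Let Λ be a nonzero real number and M a real symmetric positive definite 3×3 matrix with tr(√M) = |Λ|. For a real symmetric 3×3 matrix N let G_M(N) denote the unique real symmetric 3×3 matrix G satisfying G·M^{-1/2} + M^{-1/2}·G = -M⁻¹·N·M⁻¹, and define L(N) := G_M(N - (1/|Λ|)·tr(M^{-1/2}·N)·M). Then L is a self-adjoint, negative semi-definite linear operator on real symmetric 3×3 matrices whose kernel is exactly the span of M: for all symmetric N, N' one has tr(L(N)·N') = tr(N·L(N')), tr(L(N)·N) ≤ 0, and L(N) = 0 if and only if N = c·M for some real c. -/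

import Mathlib

open Matrix

open scoped ComplexOrder in
/-- The square root of a positive semidefinite matrix, as `Matrix.PosSemidef.sqrt` was defined
in Mathlib (December 2024); it has since been removed from Mathlib. -/
noncomputable def Matrix.PosSemidef.sqrt {n 𝕜 : Type*} [Fintype n] [RCLike 𝕜] [DecidableEq n]
    {A : Matrix n n 𝕜} (hA : A.PosSemidef) : Matrix n n 𝕜 :=
  (hA.isHermitian.eigenvectorUnitary : Matrix n n 𝕜) *
    diagonal ((↑) ∘ (Real.sqrt ·) ∘ hA.isHermitian.eigenvalues) *
    (star hA.isHermitian.eigenvectorUnitary : Matrix n n 𝕜)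

open scoped ComplexOrder in
lemma Matrix.PosSemidef.posSemidef_sqrt {n 𝕜 : Type*} [Fintype n] [RCLike 𝕜] [DecidableEq n]
    {A : Matrix n n 𝕜} (hA : A.PosSemidef) : hA.sqrt.PosSemidef := by
  unfold Matrix.PosSemidef.sqrt
  have hD : (diagonal ((↑) ∘ (Real.sqrt ·) ∘ hA.isHermitian.eigenvalues) : Matrix n n 𝕜).PosSemidef := by
    rw [Matrix.posSemidef_diagonal_iff]
    intro i
    simp only [Function.comp_apply]
    exact_mod_cast Real.sqrt_nonneg _
  have := hD.mul_mul_conjTranspose_same (hA.isHermitian.eigenvectorUnitary : Matrix n n 𝕜)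
  simpa [Matrix.star_eq_conjTranspose] using this

open scoped ComplexOrder in
lemma Matrix.PosSemidef.sqrt_mul_self {n 𝕜 : Type*} [Fintype n] [RCLike 𝕜] [DecidableEq n]
    {A : Matrix n n 𝕜} (hA : A.PosSemidef) : hA.sqrt * hA.sqrt = A := by
  unfold Matrix.PosSemidef.sqrt
  set U : Matrix n n 𝕜 := (hA.isHermitian.eigenvectorUnitary : Matrix n n 𝕜) with hU
  have hUU : star U * U = 1 := Unitary.star_mul_self_of_mem hA.isHermitian.eigenvectorUnitary.2
  have hDD : (diagonal ((↑) ∘ (Real.sqrt ·) ∘ hA.isHermitian.eigenvalues) : Matrix n n 𝕜) *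
      diagonal ((↑) ∘ (Real.sqrt ·) ∘ hA.isHermitian.eigenvalues)
      = diagonal (RCLike.ofReal ∘ hA.isHermitian.eigenvalues) := by
    rw [Matrix.diagonal_mul_diagonal]
    congr 1
    funext i
    simp only [Function.comp_apply]
    rw [← RCLike.ofReal_mul, Real.mul_self_sqrt (hA.eigenvalues_nonneg i)]
  have hsp := hA.isHermitian.spectral_theorem
  simp only [Unitary.conjStarAlgAut_apply] at hsp
  calc U * diagonal ((↑) ∘ (Real.sqrt ·) ∘ hA.isHermitian.eigenvalues) * star U *
        (U * diagonal ((↑) ∘ (Real.sqrt ·) ∘ hA.isHermitian.eigenvalues) * star U)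
      = U * (diagonal ((↑) ∘ (Real.sqrt ·) ∘ hA.isHermitian.eigenvalues) * (star U * U) *
        diagonal ((↑) ∘ (Real.sqrt ·) ∘ hA.isHermitian.eigenvalues)) * star U := by
        simp only [Matrix.mul_assoc]
    _ = A := by rw [hUU, Matrix.mul_one, hDD]; exact hsp.symm

private lemma trace_mul_conjT_nonneg (B : Matrix (Fin 3) (Fin 3) ℝ) :
    0 ≤ (B * Bᴴ).trace := by
  rw [Matrix.trace]
  refine Finset.sum_nonneg fun i _ => ?_
  simp only [Matrix.diag_apply, Matrix.mul_apply, Matrix.conjTranspose_apply, star_trivial]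
  exact Finset.sum_nonneg fun j _ => mul_self_nonneg _

private lemma eq_zero_of_trace_mul_conjT {B : Matrix (Fin 3) (Fin 3) ℝ}
    (h : (B * Bᴴ).trace = 0) : B = 0 := by
  rw [Matrix.trace] at h
  have h1 : ∀ i ∈ Finset.univ, (0:ℝ) ≤ (B * Bᴴ).diag i := fun i _ => by
    simp only [Matrix.diag_apply, Matrix.mul_apply, Matrix.conjTranspose_apply, star_trivial]
    exact Finset.sum_nonneg fun j _ => mul_self_nonneg _
  have hd := (Finset.sum_eq_zero_iff_of_nonneg h1).1 h
  ext i j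
  have hi := hd i (Finset.mem_univ i)
  simp only [Matrix.diag_apply, Matrix.mul_apply, Matrix.conjTranspose_apply, star_trivial] at hi
  have h2 : ∀ k ∈ Finset.univ, (0:ℝ) ≤ B i k * B i k := fun k _ => mul_self_nonneg _
  have := (Finset.sum_eq_zero_iff_of_nonneg h2).1 hi j (Finset.mem_univ j)
  simpa [mul_self_eq_zero] using this

set_option maxHeartbeats 1000000 in
/-- Lemma 5.8 of the paper, `L_semi-definite`.  Let `Λ ≠ 0`
and `M` real symmetric positive definite (3×3) with `tr(√M) = |Λ|`.  For
symmetric `N`, `G N` denotes the unique symmetric solution of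
`G·M^{-1/2} + M^{-1/2}·G = -M⁻¹·N·M⁻¹` (hypothesis `hG`), and
`L N := G (N - (1/|Λ|)·tr(M^{-1/2}·N)·M)`.  Then `L` is self-adjoint and
negative semi-definite for the trace pairing, with kernel exactly the span
of `M`. -/
theorem stmt_4 (Λ : ℝ) (hΛ : Λ ≠ 0) (M : Matrix (Fin 3) (Fin 3) ℝ) (hM : M.PosDef)
    (htr : hM.posSemidef.sqrt.trace = |Λ|)
    (G : Matrix (Fin 3) (Fin 3) ℝ → Matrix (Fin 3) (Fin 3) ℝ)
    (hG : ∀ N : Matrix (Fin 3) (Fin 3) ℝ, N.IsHermitian →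
      (G N).IsHermitian ∧
      G N * (hM.posSemidef.sqrt)⁻¹ + (hM.posSemidef.sqrt)⁻¹ * G N = -(M⁻¹ * N * M⁻¹))
    (L : Matrix (Fin 3) (Fin 3) ℝ → Matrix (Fin 3) (Fin 3) ℝ)
    (hL : ∀ N : Matrix (Fin 3) (Fin 3) ℝ,
      L N = G (N - ((1 / |Λ|) * ((hM.posSemidef.sqrt)⁻¹ * N).trace) • M)) :
    (∀ N N' : Matrix (Fin 3) (Fin 3) ℝ, N.IsHermitian → N'.IsHermitian →
        (L N * N').trace = (N * L N').trace) ∧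
    (∀ N : Matrix (Fin 3) (Fin 3) ℝ, N.IsHermitian → (L N * N).trace ≤ 0) ∧
    (∀ N : Matrix (Fin 3) (Fin 3) ℝ, N.IsHermitian →
        (L N = 0 ↔ ∃ c : ℝ, N = c • M)) := by
  set S : Matrix (Fin 3) (Fin 3) ℝ := hM.posSemidef.sqrt with hSdef
  have habs : |Λ| ≠ 0 := abs_ne_zero.2 hΛ
  have hSH : Sᴴ = S := hM.posSemidef.posSemidef_sqrt.1
  have hSS : S * S = M := hM.posSemidef.sqrt_mul_self
  have hdetS : S.det ≠ 0 := by
    intro h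
    have h2 := hM.det_pos
    rw [← hSS, Matrix.det_mul, h, mul_zero] at h2
    exact lt_irrefl _ h2
  have hS1 : S * S⁻¹ = 1 := Matrix.mul_nonsing_inv _ (isUnit_iff_ne_zero.2 hdetS)
  have hS2 : S⁻¹ * S = 1 := Matrix.nonsing_inv_mul _ (isUnit_iff_ne_zero.2 hdetS)
  have hM1 : M * M⁻¹ = 1 := Matrix.mul_nonsing_inv _ hM.det_pos.ne'.isUnit
  have hM2 : M⁻¹ * M = 1 := Matrix.nonsing_inv_mul _ hM.det_pos.ne'.isUnit
  have hMS : M * S⁻¹ = S := by rw [← hSS, Matrix.mul_assoc, hS1, mul_one]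
  have hSM : S⁻¹ * M = S := by rw [← hSS, ← Matrix.mul_assoc, hS2, one_mul]
  -- the square root of S
  set T : Matrix (Fin 3) (Fin 3) ℝ := hM.posSemidef.posSemidef_sqrt.sqrt
    with hTdef
  have hTT : T * T = S := hM.posSemidef.posSemidef_sqrt.sqrt_mul_self
  have hTH : Tᴴ = T :=
    hM.posSemidef.posSemidef_sqrt.posSemidef_sqrt.1
  -- abbreviation for the coefficient
  set c : Matrix (Fin 3) (Fin 3) ℝ → ℝ := fun N => (1 / |Λ|) * ((S⁻¹ * N).trace) with hcdef
  -- the key structural fact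
  have main : ∀ N : Matrix (Fin 3) (Fin 3) ℝ, N.IsHermitian →
      (L N).IsHermitian ∧ N - c N • M = -(M * L N * S + S * L N * M) := by
    intro N hN
    have hsmul : (c N • M).IsHermitian := by
      unfold Matrix.IsHermitian
      rw [Matrix.conjTranspose_smul, hM.1.eq, star_trivial]
    have hP : (N - c N • M).IsHermitian := hN.sub hsmul
    obtain ⟨hherm, heq⟩ := hG _ hP
    rw [← hL N] at hherm heq
    refine ⟨hherm, ?_⟩
    have h' := congrArg (fun X => M * X * M) heq
    rw [show M * (L N * S⁻¹ + S⁻¹ * L N) * M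
          = M * L N * (S⁻¹ * M) + (M * S⁻¹) * (L N * M) from by noncomm_ring,
        hSM, hMS,
        show M * -(M⁻¹ * (N - c N • M) * M⁻¹) * M
          = -((M * M⁻¹) * (N - c N • M) * (M⁻¹ * M)) from by noncomm_ring,
        hM1, hM2, one_mul, mul_one] at h'
    rw [show -(M * L N * S + S * L N * M) = -(M * L N * S + S * (L N * M)) from by
      noncomm_ring, h', neg_neg]
  -- trace of S⁻¹ against N - c N • M vanishes
  have htr0 : ∀ N : Matrix (Fin 3) (Fin 3) ℝ, (S⁻¹ * (N - c N • M)).trace = 0 := by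
    intro N
    rw [Matrix.mul_sub, Matrix.trace_sub, Matrix.mul_smul, Matrix.trace_smul, hSM, htr,
      smul_eq_mul, hcdef]
    field_simp
    ring
  -- trace of L N * M vanishes
  have htrLM : ∀ N : Matrix (Fin 3) (Fin 3) ℝ, N.IsHermitian → (L N * M).trace = 0 := by
    intro N hN
    obtain ⟨-, key⟩ := main N hN
    have h0 := htr0 N
    rw [key] at h0
    rw [show S⁻¹ * -(M * L N * S + S * L N * M)
          = -((S⁻¹ * M) * (L N * S) + (S⁻¹ * S) * (L N * M)) from by noncomm_ring,
        hSM, hS2, one_mul, Matrix.trace_neg, Matrix.trace_add] at h0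
    have e : (S * (L N * S)).trace = (L N * M).trace := by
      rw [Matrix.trace_mul_comm, Matrix.mul_assoc, hSS]
    rw [show S * (L N * S) = S * (L N * S) from rfl] at h0
    rw [e] at h0
    linarith
  -- pairing of L N against N' - c N' • M equals pairing against N'
  have hpair : ∀ N N' : Matrix (Fin 3) (Fin 3) ℝ, N.IsHermitian → N'.IsHermitian →
      (L N * N').trace = -((L N * (M * L N' * S)).trace + (L N * (S * L N' * M)).trace) := by
    intro N N' hN hN'
    obtain ⟨-, key'⟩ := main N' hN'
    have split : L N * N' = L N * (N' - c N' • M) + c N' • (L N * M) := by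
      rw [Matrix.mul_sub, Matrix.mul_smul]; noncomm_ring
    rw [split, Matrix.trace_add, Matrix.trace_smul, smul_eq_mul, htrLM N hN, mul_zero, add_zero,
      key', show L N * -(M * L N' * S + S * L N' * M)
          = -(L N * (M * L N' * S) + L N * (S * L N' * M)) from by noncomm_ring,
      Matrix.trace_neg, Matrix.trace_add]
  -- self-adjointness
  have hsa : ∀ N N' : Matrix (Fin 3) (Fin 3) ℝ, N.IsHermitian → N'.IsHermitian →
      (L N * N').trace = (N * L N').trace := by
    intro N N' hN hN'
    rw [hpair N N' hN hN', Matrix.trace_mul_comm N (L N'), hpair N' N hN' hN]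
    have e1 : (L N * (M * L N' * S)).trace = (L N' * (S * L N * M)).trace := by
      rw [show L N * (M * L N' * S) = (L N * M) * (L N' * S) from by noncomm_ring,
        Matrix.trace_mul_comm,
        show (L N' * S) * (L N * M) = L N' * (S * L N * M) from by noncomm_ring]
    have e2 : (L N * (S * L N' * M)).trace = (L N' * (M * L N * S)).trace := by
      rw [show L N * (S * L N' * M) = (L N * S) * (L N' * M) from by noncomm_ring,
        Matrix.trace_mul_comm,
        show (L N' * M) * (L N * S) = L N' * (M * L N * S) from by noncomm_ring]
    rw [e1, e2]
    ring
  -- the quadratic form in terms of a square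
  have hsq : ∀ N : Matrix (Fin 3) (Fin 3) ℝ, N.IsHermitian →
      (L N * (M * L N * S)).trace = ((S * L N * T) * (S * L N * T)ᴴ).trace ∧
      (L N * (S * L N * M)).trace = ((S * L N * T) * (S * L N * T)ᴴ).trace := by
    intro N hN
    obtain ⟨hherm, -⟩ := main N hN
    set K := L N
    have hB : (S * K * T)ᴴ = T * (K * S) := by
      rw [Matrix.conjTranspose_mul, Matrix.conjTranspose_mul, hTH, hSH, hherm.eq]
    have hBB : (S * K * T) * (S * K * T)ᴴ = (S * (K * S)) * (K * S) := by
      rw [hB, show (S * K * T) * (T * (K * S)) = S * K * (T * T) * (K * S) from by noncomm_ring,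
        hTT]
      noncomm_ring
    constructor
    · rw [hBB, show K * (M * K * S) = (K * S) * (S * (K * S)) from by
        rw [← hSS]; noncomm_ring, Matrix.trace_mul_comm]
    · rw [hBB, show K * (S * K * M) = (K * (S * (K * S))) * S from by
        rw [← hSS]; noncomm_ring, Matrix.trace_mul_comm,
        show S * (K * (S * (K * S))) = (S * (K * S)) * (K * S) from by noncomm_ring]
  -- negative semidefiniteness
  have hneg : ∀ N : Matrix (Fin 3) (Fin 3) ℝ, N.IsHermitian → (L N * N).trace ≤ 0 := by
    intro N hN
    obtain ⟨e1, e2⟩ := hsq N hN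
    rw [hpair N N hN hN, e1, e2]
    have := trace_mul_conjT_nonneg (S * L N * T)
    linarith
  refine ⟨hsa, hneg, ?_⟩
  -- kernel
  intro N hN
  obtain ⟨hherm, key⟩ := main N hN
  constructor
  · intro h0
    refine ⟨c N, ?_⟩
    rw [h0] at key
    simp only [Matrix.mul_zero, Matrix.zero_mul, add_zero, neg_zero] at key
    rw [sub_eq_zero] at key
    exact key
  · rintro ⟨c₀, rfl⟩
    have hc : c (c₀ • M) = c₀ := by
      rw [hcdef]
      dsimp only
      rw [Matrix.mul_smul, Matrix.trace_smul, hSM, htr, smul_eq_mul]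
      field_simp
    rw [hc] at key
    simp only [sub_self] at key
    have key2 : M * L (c₀ • M) * S + S * L (c₀ • M) * M = 0 := by
      have := congrArg Neg.neg key
      simpa using this.symm
    obtain ⟨e1, e2⟩ := hsq (c₀ • M) (by
      unfold Matrix.IsHermitian
      rw [Matrix.conjTranspose_smul, hM.1.eq, star_trivial])
    set K := L (c₀ • M) with hKdef
    have htrz : ((S * K * T) * (S * K * T)ᴴ).trace = 0 := by
      have h3 : (K * (M * K * S)).trace + (K * (S * K * M)).trace
          = (K * (M * K * S + S * K * M)).trace := by
        rw [Matrix.mul_add, Matrix.trace_add]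
      have h4 : (K * (M * K * S)).trace = (K * (M * K * S)).trace := rfl
      have e1' : (K * (M * K * S)).trace = ((S * K * T) * (S * K * T)ᴴ).trace := by
        have := e1
        rwa [show L (c₀ • M) * (M * L (c₀ • M) * S) = K * (M * K * S) from rfl] at this
      have e2' : (K * (S * K * M)).trace = ((S * K * T) * (S * K * T)ᴴ).trace := by
        have := e2
        rwa [show L (c₀ • M) * (S * L (c₀ • M) * M) = K * (S * K * M) from rfl] at this
      rw [e1', e2', key2] at h3
      simp only [Matrix.mul_zero, Matrix.trace_zero] at h3
      linarith
    have hB0 : S * K * T = 0 := eq_zero_of_trace_mul_conjT htrz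
    have hSKS : S * K * S = 0 := by
      have h6 := congrArg (fun X => X * T) hB0
      rw [Matrix.zero_mul] at h6
      have h7 : S * K * (T * T) = 0 := by rw [← Matrix.mul_assoc]; exact h6
      rwa [hTT] at h7
    have : K = 0 := by
      have h5 := congrArg (fun X => S⁻¹ * X * S⁻¹) hSKS
      rw [Matrix.mul_zero, Matrix.zero_mul,
        show S⁻¹ * (S * K * S) * S⁻¹ = (S⁻¹ * S) * K * (S * S⁻¹) from by noncomm_ring,
        hS1, hS2, one_mul, mul_one] at h5
      exact h5
    exact this
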